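/- arXiv:1805.05301 — 2 statements merged into one kernel-verified Lean document; each statement's English description precedes it below -/
import Mathlib

section
/- Let A be a Hopf algebra and L a unital partial A-module algebra. Define φ: L → Hom(A, L) by φ(x)(a) = a · x. Then φ is an injective algebra homomorphism, where Hom(A,L) has the convolution product (fg)(a) = f(a₁)g(a₂), and moreover φ(x)(a ▷ φ(y)) = φ(x(a·y)) for all a ∈ A, x,y ∈ L, where (a ▷ f)(c) = f(ca). -/
open TensorProduct

variable {k A L : Type*}

/-- Sweedler-style convolution: `conv f g = Σ f(a₁) * g(a₂)` as a linear map on `A`. -/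
noncomputable def conv [Field k] [Ring A] [HopfAlgebra k A] [Ring L] [Algebra k L]
    (f g : A →ₗ[k] L) : A →ₗ[k] L :=
  TensorProduct.lift ((LinearMap.mul k L).compl₁₂ f g) ∘ₗ Coalgebra.comul

/-- For a unital partial `A`-module algebra `L`, the map
`φ : L → Hom(A,L)`, `φ(x)(a) = a · x`, is an injective algebra homomorphism into the
convolution algebra `Hom(A,L)`, and `φ(x)(a ▷ φ(y)) = φ(x(a·y))`, where
`(a ▷ f)(c) = f(ca)`. -/
theorem phi_monomorphism_into_Hom
    [Field k] [Ring A] [HopfAlgebra k A] [Ring L] [Algebra k L]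
    -- partial action of A on L, with φ x = pact.flip x:
    (pact : A →ₗ[k] L →ₗ[k] L)
    (hp_one : ∀ x : L, pact 1 x = x)
    (hp_comp : ∀ (a b : A), ∀ x y : L,
      pact a (x * pact b y) =
        conv (pact.flip x) ((pact.flip y) ∘ₗ LinearMap.mulRight k b) a) :
    -- φ is injective
    Function.Injective (fun x : L => pact.flip x) ∧
    -- φ is multiplicative for the convolution product
    (∀ x y : L, pact.flip (x * y) = conv (pact.flip x) (pact.flip y)) ∧
    -- φ(x)(a ▷ φ(y)) = φ(x(a·y))
    (∀ (a : A) (x y : L),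
      conv (pact.flip x) ((pact.flip y) ∘ₗ LinearMap.mulRight k a) =
        pact.flip (x * pact a y)) := by
  refine ⟨?_, ?_, ?_⟩
  · intro x y h
    have := congrArg (fun f => f 1) h
    simpa [hp_one] using this
  · intro x y
    ext a
    have h := hp_comp a 1 x y
    have h1 : LinearMap.mulRight k (1 : A) = LinearMap.id := by
      ext c; simp
    rw [h1] at h
    simpa [hp_one] using h
  · intro a x y
    ext c
    exact (hp_comp c a x y).symm
end

section
/- Let A be a Hopf algebra, L a unital partial A-module algebra, φ: L → Hom(A,L) the map φ(x)(a) = a·x, and R = A ▷ φ(L) the k-span of elements a ▷ φ(x) inside Hom(A,L). Then R is an A-submodule algebra of Hom(A,L): it is closed under the A-action and under the convolution product, with (a ▷ φ(x))(b ▷ φ(y)) = a₁ ▷ φ(x(S(a₂)b · y)). Moreover φ(L) ⊆ R and φ(L) is a right ideal of R. -/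
open TensorProduct

set_option synthInstance.maxHeartbeats 1000000
set_option maxHeartbeats 2000000

variable {k A L : Type*}

/-- The bilinear map `(u, v) ↦ (a ▷-action by u) of φ(x · ((S v)b · y))`, i.e.
`B u v = φ(x (S(v)b · y)) ∘ mulRight u`, used to express
`Σ a₁ ▷ φ(x (S(a₂)b · y))` as `lift B (comul a)`. -/
noncomputable def prodB [Field k] [Ring A] [HopfAlgebra k A] [Ring L] [Algebra k L]
    (pact : A →ₗ[k] L →ₗ[k] L) (b : A) (x y : L) : A →ₗ[k] A →ₗ[k] (A →ₗ[k] L) :=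
  (((LinearMap.llcomp k A (A →ₗ[k] A) (A →ₗ[k] L)).flip ((LinearMap.mul k A).flip)) ∘ₗ
    (LinearMap.llcomp k A A L) ∘ₗ
    (pact.flip ∘ₗ LinearMap.mulLeft k x ∘ₗ pact.flip y ∘ₗ LinearMap.mulRight k b ∘ₗ
      HopfAlgebra.antipode (R := k))).flip

section Aux

variable [Field k] [Ring A] [HopfAlgebra k A] [Ring L] [Algebra k L]

lemma aux_lift_mul_tmul (f g : A →ₗ[k] L) (p q : A) :
    TensorProduct.lift ((LinearMap.mul k L).compl₁₂ f g) (p ⊗ₜ[k] q) = f p * g q := by simp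

lemma aux_conv_apply (f g : A →ₗ[k] L) (c : A) :
    conv f g c =
      TensorProduct.lift ((LinearMap.mul k L).compl₁₂ f g) (Coalgebra.comul c) := rfl

lemma aux_conv_add_left (f f' g : A →ₗ[k] L) : conv (f + f') g = conv f g + conv f' g := by
  ext a
  have h : ∀ t : A ⊗[k] A,
      TensorProduct.lift ((LinearMap.mul k L).compl₁₂ (f + f') g) t =
      TensorProduct.lift ((LinearMap.mul k L).compl₁₂ f g) t +
      TensorProduct.lift ((LinearMap.mul k L).compl₁₂ f' g) t := by
    intro t
    induction t using TensorProduct.induction_on with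
    | zero => simp
    | tmul p q => simp [add_mul]
    | add s t hs ht => simp only [map_add, hs, ht]; abel
  simpa [conv] using h (Coalgebra.comul a)

lemma aux_conv_smul_left (c : k) (f g : A →ₗ[k] L) : conv (c • f) g = c • conv f g := by
  ext a
  have h : ∀ t : A ⊗[k] A,
      TensorProduct.lift ((LinearMap.mul k L).compl₁₂ (c • f) g) t =
      c • TensorProduct.lift ((LinearMap.mul k L).compl₁₂ f g) t := by
    intro t
    induction t using TensorProduct.induction_on with
    | zero => simp
    | tmul p q => simp [smul_mul_assoc]
    | add s t hs ht => simp only [map_add, hs, ht, smul_add]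
  simpa [conv] using h (Coalgebra.comul a)

lemma aux_conv_add_right (f g g' : A →ₗ[k] L) : conv f (g + g') = conv f g + conv f g' := by
  ext a
  have h : ∀ t : A ⊗[k] A,
      TensorProduct.lift ((LinearMap.mul k L).compl₁₂ f (g + g')) t =
      TensorProduct.lift ((LinearMap.mul k L).compl₁₂ f g) t +
      TensorProduct.lift ((LinearMap.mul k L).compl₁₂ f g') t := by
    intro t
    induction t using TensorProduct.induction_on with
    | zero => simp
    | tmul p q => simp [mul_add]
    | add s t hs ht => simp only [map_add, hs, ht]; abel
  simpa [conv] using h (Coalgebra.comul a)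

lemma aux_conv_smul_right (c : k) (f g : A →ₗ[k] L) : conv f (c • g) = c • conv f g := by
  ext a
  have h : ∀ t : A ⊗[k] A,
      TensorProduct.lift ((LinearMap.mul k L).compl₁₂ f (c • g)) t =
      c • TensorProduct.lift ((LinearMap.mul k L).compl₁₂ f g) t := by
    intro t
    induction t using TensorProduct.induction_on with
    | zero => simp
    | tmul p q => simp [mul_smul_comm]
    | add s t hs ht => simp only [map_add, hs, ht, smul_add]
  simpa [conv] using h (Coalgebra.comul a)

lemma aux_conv_zero_left (g : A →ₗ[k] L) : conv (0 : A →ₗ[k] L) g = 0 := by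
  simpa using aux_conv_smul_left (0 : k) (0 : A →ₗ[k] L) g

lemma aux_conv_zero_right (f : A →ₗ[k] L) : conv f (0 : A →ₗ[k] L) = 0 := by
  simpa using aux_conv_smul_right (0 : k) f (0 : A →ₗ[k] L)

lemma aux_comp_mulRight_add (f : A →ₗ[k] L) (p p' : A) :
    f ∘ₗ LinearMap.mulRight k (p + p') =
      f ∘ₗ LinearMap.mulRight k p + f ∘ₗ LinearMap.mulRight k p' := by
  ext c; simp [mul_add]

lemma aux_comp_mulRight_smul (f : A →ₗ[k] L) (s : k) (p : A) :
    f ∘ₗ LinearMap.mulRight k (s • p) = s • (f ∘ₗ LinearMap.mulRight k p) := by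
  ext c; simp [mul_smul_comm]

/-- `Kb u w = φ(x * ((w*b)·y)) ∘ mulRight u`. -/
noncomputable def Kb (pact : A →ₗ[k] L →ₗ[k] L) (b : A) (x y : L) :
    A →ₗ[k] A →ₗ[k] (A →ₗ[k] L) :=
  LinearMap.mk₂ k
    (fun u w => (pact.flip (x * pact (w * b) y)) ∘ₗ LinearMap.mulRight k u)
    (fun u u' w => by ext c; simp [mul_add])
    (fun s u w => by ext c; simp [mul_smul_comm])
    (fun u w w' => by ext c; simp [add_mul, mul_add])
    (fun s u w => by ext c; simp [smul_mul_assoc, mul_smul_comm])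

/-- `Hb p s = conv (φ x ∘ mulRight p) (φ y ∘ mulRight (s*b))`. -/
noncomputable def Hb (pact : A →ₗ[k] L →ₗ[k] L) (b : A) (x y : L) :
    A →ₗ[k] A →ₗ[k] (A →ₗ[k] L) :=
  LinearMap.mk₂ k
    (fun p s => conv (pact.flip x ∘ₗ LinearMap.mulRight k p)
                     (pact.flip y ∘ₗ LinearMap.mulRight k (s * b)))
    (fun p p' s => by
      rw [aux_comp_mulRight_add, aux_conv_add_left])
    (fun c p s => by
      rw [aux_comp_mulRight_smul, aux_conv_smul_left])
    (fun p s s' => by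
      rw [add_mul, aux_comp_mulRight_add, aux_conv_add_right])
    (fun c p s => by
      rw [smul_mul_assoc, aux_comp_mulRight_smul, aux_conv_smul_right])

lemma aux_Kb_apply (pact : A →ₗ[k] L →ₗ[k] L) (b x y u w) :
    Kb pact b x y u w = (pact.flip (x * pact (w * b) y)) ∘ₗ LinearMap.mulRight k u := rfl

lemma aux_Hb_apply (pact : A →ₗ[k] L →ₗ[k] L) (b x y p s) :
    Hb pact b x y p s =
      conv (pact.flip x ∘ₗ LinearMap.mulRight k p)
        (pact.flip y ∘ₗ LinearMap.mulRight k (s * b)) := rfl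

/-- Step A: `lift prodB t = lift Kb ((1 ⊗ S) t)`. -/
lemma aux_stepA (pact : A →ₗ[k] L →ₗ[k] L) (b : A) (x y : L) (t : A ⊗[k] A) :
    TensorProduct.lift (prodB pact b x y) t =
      TensorProduct.lift (Kb pact b x y) ((HopfAlgebra.antipode (R := k)).lTensor A t) := by
  induction t using TensorProduct.induction_on with
  | zero => simp
  | tmul u v =>
      ext c
      simp [prodB, Kb, LinearMap.mk₂]
  | add s t hs ht => simp only [map_add, hs, ht]

/-- Step B: `lift Kb (u ⊗ w) = lift Hb (Σ u₁ ⊗ (u₂ * w))`, using `hp_comp`. -/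
lemma aux_stepB (pact : A →ₗ[k] L →ₗ[k] L)
    (hp_comp : ∀ (a b : A), ∀ x y : L,
      pact a (x * pact b y) =
        conv (pact.flip x) ((pact.flip y) ∘ₗ LinearMap.mulRight k b) a)
    (b : A) (x y : L) (t : A ⊗[k] A) :
    TensorProduct.lift (Kb pact b x y) t =
      (TensorProduct.lift (Hb pact b x y) ∘ₗ
        (LinearMap.mul' k A).lTensor A ∘ₗ
        (TensorProduct.assoc k A A A).toLinearMap ∘ₗ
        (Coalgebra.comul (R := k)).rTensor A) t := by
  induction t using TensorProduct.induction_on with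
  | zero => simp only [map_zero]
  | tmul u w =>
      ext c
      -- LHS = pact (c*u) (x * pact (w*b) y)
      have hL : TensorProduct.lift (Kb pact b x y) (u ⊗ₜ[k] w) c =
          TensorProduct.lift
            ((LinearMap.mul k L).compl₁₂ (pact.flip x)
              (pact.flip y ∘ₗ LinearMap.mulRight k (w * b)))
            (Coalgebra.comul c * Coalgebra.comul u) := by
        rw [TensorProduct.lift.tmul, aux_Kb_apply]
        have := hp_comp (c * u) (w * b) x y
        simpa [aux_conv_apply, Bialgebra.comul_mul] using this
      rw [hL]
      simp only [LinearMap.comp_apply, LinearMap.rTensor_tmul, LinearEquiv.coe_coe,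
        LinearMap.coe_comp, Function.comp_apply]
      -- now generalize comul u
      have key : ∀ s : A ⊗[k] A,
          TensorProduct.lift
            ((LinearMap.mul k L).compl₁₂ (pact.flip x)
              (pact.flip y ∘ₗ LinearMap.mulRight k (w * b)))
            (Coalgebra.comul c * s) =
          TensorProduct.lift (Hb pact b x y)
            ((LinearMap.mul' k A).lTensor A
              (TensorProduct.assoc k A A A (s ⊗ₜ[k] w))) c := by
        intro s
        induction s using TensorProduct.induction_on with
        | zero =>
            simp only [mul_zero, map_zero, TensorProduct.zero_tmul, LinearEquiv.map_zero,
              LinearMap.map_zero, LinearMap.zero_apply]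
        | tmul p q =>
            have key2 : ∀ t2 : A ⊗[k] A,
                TensorProduct.lift
                  ((LinearMap.mul k L).compl₁₂ (pact.flip x)
                    (pact.flip y ∘ₗ LinearMap.mulRight k (w * b)))
                  (t2 * (p ⊗ₜ[k] q)) =
                TensorProduct.lift
                  ((LinearMap.mul k L).compl₁₂
                    (pact.flip x ∘ₗ LinearMap.mulRight k p)
                    (pact.flip y ∘ₗ LinearMap.mulRight k (q * w * b))) t2 := by
              intro t2
              induction t2 using TensorProduct.induction_on with
              | zero => simp
              | tmul c1 c2 =>
                  simp [Algebra.TensorProduct.tmul_mul_tmul, mul_assoc]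
              | add s1 s2 h1 h2 => simp only [add_mul, map_add, h1, h2]
            rw [key2 (Coalgebra.comul c)]
            simp [aux_Hb_apply, aux_conv_apply, mul_assoc]
        | add s1 s2 h1 h2 =>
            simp only [mul_add, map_add, TensorProduct.add_tmul, LinearEquiv.map_add,
              LinearMap.add_apply, h1, h2]
      exact key (Coalgebra.comul u)
  | add s t hs ht => simp only [map_add, hs, ht]

/-- Step C: assoc/antipode bookkeeping. -/
lemma aux_assoc_lTensor (v : A ⊗[k] (A ⊗[k] A)) :
    TensorProduct.assoc k A A A
        ((HopfAlgebra.antipode (R := k)).lTensor (A ⊗[k] A)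
          ((TensorProduct.assoc k A A A).symm v)) =
      ((HopfAlgebra.antipode (R := k)).lTensor A).lTensor A v := by
  induction v using TensorProduct.induction_on with
  | zero => simp only [LinearEquiv.map_zero, LinearMap.map_zero]
  | tmul p t =>
      induction t using TensorProduct.induction_on with
      | zero =>
          simp only [TensorProduct.tmul_zero, LinearEquiv.map_zero, LinearMap.map_zero]
      | tmul q r => simp
      | add s1 s2 h1 h2 =>
          simp only [TensorProduct.tmul_add, map_add, h1, h2]
  | add s1 s2 h1 h2 => simp only [map_add, h1, h2]

/-- The key product formula. -/
lemma aux_prod_formula (pact : A →ₗ[k] L →ₗ[k] L)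
    (hp_comp : ∀ (a b : A), ∀ x y : L,
      pact a (x * pact b y) =
        conv (pact.flip x) ((pact.flip y) ∘ₗ LinearMap.mulRight k b) a)
    (a b : A) (x y : L) :
    conv ((pact.flip x) ∘ₗ LinearMap.mulRight k a)
        ((pact.flip y) ∘ₗ LinearMap.mulRight k b) =
      TensorProduct.lift (prodB pact b x y) (Coalgebra.comul (R := k) a) := by
  rw [aux_stepA, aux_stepB pact hp_comp]
  simp only [LinearMap.comp_apply, LinearEquiv.coe_coe]
  have h1 : (Coalgebra.comul (R := k)).rTensor A
        ((HopfAlgebra.antipode (R := k)).lTensor A (Coalgebra.comul a)) =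
      (HopfAlgebra.antipode (R := k)).lTensor (A ⊗[k] A)
        ((Coalgebra.comul (R := k)).rTensor A (Coalgebra.comul a)) := by
    have e1 := LinearMap.congr_fun
      (LinearMap.rTensor_comp_lTensor (R := k) (f := Coalgebra.comul (R := k) (A := A))
        (g := HopfAlgebra.antipode (R := k) (A := A))) (Coalgebra.comul a)
    have e2 := LinearMap.congr_fun
      (LinearMap.lTensor_comp_rTensor (R := k) (f := Coalgebra.comul (R := k) (A := A))
        (g := HopfAlgebra.antipode (R := k) (A := A))) (Coalgebra.comul a)
    simp only [LinearMap.comp_apply] at e1 e2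
    exact e1.trans e2.symm
  rw [h1,
    show (Coalgebra.comul (R := k)).rTensor A (Coalgebra.comul a) =
        (TensorProduct.assoc k A A A).symm
          ((Coalgebra.comul (R := k)).lTensor A (Coalgebra.comul a)) from
      (Coalgebra.coassoc_symm_apply a).symm,
    aux_assoc_lTensor]
  have h2 : (LinearMap.mul' k A).lTensor A
        (((HopfAlgebra.antipode (R := k)).lTensor A).lTensor A
          ((Coalgebra.comul (R := k)).lTensor A (Coalgebra.comul a))) =
      ((LinearMap.mul' k A ∘ₗ (HopfAlgebra.antipode (R := k)).lTensor A ∘ₗ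
        Coalgebra.comul).lTensor A) (Coalgebra.comul a) := by
    simp only [LinearMap.lTensor_comp, LinearMap.comp_apply]
  rw [h2, HopfAlgebra.mul_antipode_lTensor_comul]
  have h3 : ((Algebra.linearMap k A ∘ₗ Coalgebra.counit).lTensor A) (Coalgebra.comul a) =
      (Algebra.linearMap k A).lTensor A
        ((Coalgebra.counit (R := k)).lTensor A (Coalgebra.comul a)) := by
    simp only [LinearMap.lTensor_comp, LinearMap.comp_apply]
  rw [h3, Coalgebra.lTensor_counit_comul]
  simp [aux_Hb_apply]

end Aux

theorem span_phi_submodule_algebra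
    [Field k] [Ring A] [HopfAlgebra k A] [Ring L] [Algebra k L]
    (pact : A →ₗ[k] L →ₗ[k] L)
    (hp_one : ∀ x : L, pact 1 x = x)
    (hp_comp : ∀ (a b : A), ∀ x y : L,
      pact a (x * pact b y) =
        conv (pact.flip x) ((pact.flip y) ∘ₗ LinearMap.mulRight k b) a) :
    ∀ R : Submodule k (A →ₗ[k] L),
      R = Submodule.span k
            {f | ∃ (a : A) (x : L), f = (pact.flip x) ∘ₗ LinearMap.mulRight k a} →
      -- R is closed under the A-action (a ▷ f)(c) = f(ca)
      (∀ (a : A), ∀ f ∈ R, f ∘ₗ LinearMap.mulRight k a ∈ R) ∧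
      -- the product of generators: (a ▷ φ(x))(b ▷ φ(y)) = Σ a₁ ▷ φ(x(S(a₂)b · y))
      (∀ (a b : A) (x y : L),
        conv ((pact.flip x) ∘ₗ LinearMap.mulRight k a)
             ((pact.flip y) ∘ₗ LinearMap.mulRight k b) =
          TensorProduct.lift (prodB pact b x y) (Coalgebra.comul (R := k) a)) ∧
      -- R is closed under the convolution product
      (∀ f ∈ R, ∀ g ∈ R, conv f g ∈ R) ∧
      -- φ(L) ⊆ R
      (∀ x : L, pact.flip x ∈ R) ∧
      -- φ(L) is a right ideal of R
      (∀ (x : L), ∀ g ∈ R, conv (pact.flip x) g ∈ Set.range pact.flip) := by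
  intro R hR
  subst hR
  set S : Set (A →ₗ[k] L) :=
    {f | ∃ (a : A) (x : L), f = (pact.flip x) ∘ₗ LinearMap.mulRight k a} with hS
  -- generators belong
  have hgen : ∀ (a : A) (x : L),
      (pact.flip x) ∘ₗ LinearMap.mulRight k a ∈ Submodule.span k S :=
    fun a x => Submodule.subset_span ⟨a, x, rfl⟩
  -- closure under the action
  have hact : ∀ (a : A), ∀ f ∈ Submodule.span k S,
      f ∘ₗ LinearMap.mulRight k a ∈ Submodule.span k S := by
    intro a f hf
    induction hf using Submodule.span_induction with
    | mem f hf =>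
        obtain ⟨a', x, rfl⟩ := hf
        have : (pact.flip x ∘ₗ LinearMap.mulRight k a') ∘ₗ LinearMap.mulRight k a =
            pact.flip x ∘ₗ LinearMap.mulRight k (a * a') := by
          ext c; simp [mul_assoc]
        rw [this]; exact hgen _ _
    | zero => simpa using Submodule.zero_mem _
    | add f g hf hg hf' hg' =>
        rw [LinearMap.add_comp]; exact Submodule.add_mem _ hf' hg'
    | smul c f hf hf' =>
        rw [LinearMap.smul_comp]; exact Submodule.smul_mem _ _ hf'
  -- product formula
  have hprod := aux_prod_formula pact hp_comp
  -- lift Kb lands in the span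
  have hKb : ∀ (b : A) (x y : L) (t : A ⊗[k] A),
      TensorProduct.lift (Kb pact b x y) t ∈ Submodule.span k S := by
    intro b x y t
    induction t using TensorProduct.induction_on with
    | zero => simpa using Submodule.zero_mem _
    | tmul u w =>
        rw [TensorProduct.lift.tmul, aux_Kb_apply]
        exact hgen _ _
    | add s t hs ht => rw [map_add]; exact Submodule.add_mem _ hs ht
  -- closure under convolution
  have hconv : ∀ f ∈ Submodule.span k S, ∀ g ∈ Submodule.span k S,
      conv f g ∈ Submodule.span k S := by
    intro f hf
    induction hf using Submodule.span_induction with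
    | mem f hf =>
        obtain ⟨a, x, rfl⟩ := hf
        intro g hg
        induction hg using Submodule.span_induction with
        | mem g hg =>
            obtain ⟨b, y, rfl⟩ := hg
            rw [hprod a b x y, aux_stepA]
            exact hKb _ _ _ _
        | zero => rw [aux_conv_zero_right]; exact Submodule.zero_mem _
        | add g g' hg hg' ihg ihg' =>
            rw [aux_conv_add_right]; exact Submodule.add_mem _ ihg ihg'
        | smul c g hg ihg' =>
            rw [aux_conv_smul_right]; exact Submodule.smul_mem _ _ ihg'
    | zero =>
        intro g hg; rw [aux_conv_zero_left]; exact Submodule.zero_mem _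
    | add f f' hf hf' ihf ihf' =>
        intro g hg
        rw [aux_conv_add_left]; exact Submodule.add_mem _ (ihf g hg) (ihf' g hg)
    | smul c f hf ihf =>
        intro g hg
        rw [aux_conv_smul_left]; exact Submodule.smul_mem _ _ (ihf g hg)
  -- φ(L) ⊆ R
  have hphi : ∀ x : L, pact.flip x ∈ Submodule.span k S := by
    intro x
    have : pact.flip x = pact.flip x ∘ₗ LinearMap.mulRight k 1 := by
      ext c; simp
    rw [this]; exact hgen _ _
  -- right ideal
  have hideal : ∀ (x : L), ∀ g ∈ Submodule.span k S,
      conv (pact.flip x) g ∈ Set.range pact.flip := by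
    intro x g hg
    have hmem : conv (pact.flip x) g ∈ LinearMap.range pact.flip := by
      induction hg using Submodule.span_induction with
      | mem g hg =>
          obtain ⟨b, y, rfl⟩ := hg
          have : conv (pact.flip x) (pact.flip y ∘ₗ LinearMap.mulRight k b) =
              pact.flip (x * pact b y) := by
            ext a; exact (hp_comp a b x y).symm
          rw [this]; exact LinearMap.mem_range_self _ _
      | zero => rw [aux_conv_zero_right]; exact Submodule.zero_mem _
      | add g g' hg hg' ihg ihg' =>
          rw [aux_conv_add_right]; exact Submodule.add_mem _ ihg ihg'
      | smul c g hg ihg =>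
          rw [aux_conv_smul_right]; exact Submodule.smul_mem _ _ ihg
    exact LinearMap.mem_range.mp hmem
  exact ⟨hact, hprod, hconv, hphi, hideal⟩
end
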